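/- Let α : 𝒳 → 𝒳, β : 𝒰 → 𝒳, γ : 𝒳 → 𝒴, δ : 𝒰 → 𝒴 be bounded operators between complex Hilbert spaces such that the system matrix M = [[δ, γ],[β, α]] : 𝒰 ⊕ 𝒳 → 𝒴 ⊕ 𝒳 is a contraction. Then for every complex λ with |λ| < 1 the operator I − λα is invertible, and the transfer function F(λ) = δ + λ γ (I − λα)⁻¹ β satisfies, for every u ∈ 𝒰, the inequality ‖F(λ)u‖² + (1 − |λ|²)‖(I − λα)⁻¹ β u‖² ≤ ‖u‖²; in particular ‖F(λ)‖ ≤ 1 for every λ in the open unit disc, so that F is a Schur class function. -/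

import Mathlib

/- Statement 2: If the system matrix M = [[δ, γ],[β, α]] : 𝒰 ⊕ 𝒳 → 𝒴 ⊕ 𝒳 is a
contraction, then for every λ in the open unit disc the operator I − λα is invertible,
and the transfer function F(λ) = δ + λγ(I − λα)⁻¹β satisfies
‖F(λ)u‖² + (1 − |λ|²)‖(I − λα)⁻¹βu‖² ≤ ‖u‖² for all u; in particular ‖F(λ)‖ ≤ 1,
so F is a Schur class function. -/

open ContinuousLinearMap

noncomputable section

variable {𝒳 𝒰 𝒴 : Type*}
  [NormedAddCommGroup 𝒳] [InnerProductSpace ℂ 𝒳] [CompleteSpace 𝒳]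
  [NormedAddCommGroup 𝒰] [InnerProductSpace ℂ 𝒰] [CompleteSpace 𝒰]
  [NormedAddCommGroup 𝒴] [InnerProductSpace ℂ 𝒴] [CompleteSpace 𝒴]

/-- row operator `[g₁ g₂] : A ⊕ B → C`. -/
noncomputable def rowC {A B C : Type*}
    [NormedAddCommGroup A] [InnerProductSpace ℂ A]
    [NormedAddCommGroup B] [InnerProductSpace ℂ B]
    [NormedAddCommGroup C] [InnerProductSpace ℂ C]
    (g₁ : A →L[ℂ] C) (g₂ : B →L[ℂ] C) : WithLp 2 (A × B) →L[ℂ] C :=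
  (g₁.coprod g₂).comp (WithLp.prodContinuousLinearEquiv 2 ℂ A B).toContinuousLinearMap

/-- 2×2 block operator `[[d, g],[b, a]] : A ⊕ B → C ⊕ D`. -/
noncomputable def block2 {A B C D : Type*}
    [NormedAddCommGroup A] [InnerProductSpace ℂ A]
    [NormedAddCommGroup B] [InnerProductSpace ℂ B]
    [NormedAddCommGroup C] [InnerProductSpace ℂ C]
    [NormedAddCommGroup D] [InnerProductSpace ℂ D]
    (d : A →L[ℂ] C) (g : B →L[ℂ] C) (b : A →L[ℂ] D) (a : B →L[ℂ] D) :
    WithLp 2 (A × B) →L[ℂ] WithLp 2 (C × D) :=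
  ((WithLp.prodContinuousLinearEquiv 2 ℂ C D).symm).toContinuousLinearMap.comp
    ((rowC d g).prod (rowC b a))

theorem transfer_function_of_contractive_system_is_schur
    (α : 𝒳 →L[ℂ] 𝒳) (β : 𝒰 →L[ℂ] 𝒳) (γ : 𝒳 →L[ℂ] 𝒴) (δ : 𝒰 →L[ℂ] 𝒴)
    (hM : ‖block2 δ γ β α‖ ≤ 1) (z : ℂ) (hz : ‖z‖ < 1) :
    IsUnit (1 - z • α) ∧
    (∀ u : 𝒰,
      ‖(δ + z • (γ.comp ((Ring.inverse (1 - z • α)).comp β))) u‖ ^ 2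
        + (1 - ‖z‖ ^ 2) * ‖(Ring.inverse (1 - z • α)) (β u)‖ ^ 2 ≤ ‖u‖ ^ 2) ∧
    ‖δ + z • (γ.comp ((Ring.inverse (1 - z • α)).comp β))‖ ≤ 1 := by
  have key : ∀ (u : 𝒰) (x : 𝒳), ‖δ u + γ x‖^2 + ‖β u + α x‖^2 ≤ ‖u‖^2 + ‖x‖^2 := by
    intro u x
    set v : WithLp 2 (𝒰 × 𝒳) := (WithLp.equiv 2 (𝒰 × 𝒳)).symm (u, x) with hv
    have h1 : ‖block2 δ γ β α v‖ ≤ ‖v‖ := by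
      calc ‖block2 δ γ β α v‖ ≤ ‖block2 δ γ β α‖ * ‖v‖ := le_opNorm _ _
      _ ≤ 1 * ‖v‖ := by gcongr
      _ = ‖v‖ := one_mul _
    have h2 : ‖block2 δ γ β α v‖^2 ≤ ‖v‖^2 := pow_le_pow_left₀ (norm_nonneg _) h1 2
    have h3 : ‖block2 δ γ β α v‖^2 = ‖δ u + γ x‖^2 + ‖β u + α x‖^2 := by
      rw [WithLp.prod_norm_sq_eq_of_L2]; congr 1
    have h4 : ‖v‖^2 = ‖u‖^2 + ‖x‖^2 := by
      rw [WithLp.prod_norm_sq_eq_of_L2]; congr 1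
    linarith
  have hα : ∀ x : 𝒳, ‖α x‖ ≤ ‖x‖ := by
    intro x
    have := key 0 x
    simp only [map_zero, zero_add, norm_zero] at this
    nlinarith [norm_nonneg (α x), norm_nonneg x, sq_nonneg ‖γ x‖]
  have hza : ‖z • α‖ < 1 := by
    calc ‖z • α‖ = ‖z‖ * ‖α‖ := norm_smul z α
    _ ≤ ‖z‖ * 1 := by gcongr; exact opNorm_le_bound _ zero_le_one (by simpa using hα)
    _ < 1 := by simpa using hz
  have hunit : IsUnit (1 - z • α) := (Units.oneSub _ hza).isUnit
  have main : ∀ u : 𝒰,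
      ‖(δ + z • (γ.comp ((Ring.inverse (1 - z • α)).comp β))) u‖ ^ 2
        + (1 - ‖z‖ ^ 2) * ‖(Ring.inverse (1 - z • α)) (β u)‖ ^ 2 ≤ ‖u‖ ^ 2 := by
    intro u
    set x : 𝒳 := (Ring.inverse (1 - z • α)) (β u) with hxdef
    have hmul : ((1 - z • α) * Ring.inverse (1 - z • α)) (β u) = β u := by
      rw [Ring.mul_inverse_cancel _ hunit]; rfl
    have hx : β u + α (z • x) = x := by
      have : (1 - z • α) x = β u := hmul
      rw [ContinuousLinearMap.sub_apply, ContinuousLinearMap.one_apply, ContinuousLinearMap.smul_apply] at this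
      rw [map_smul]
      linear_combination (norm := module) -this
    have happ : (δ + z • (γ.comp ((Ring.inverse (1 - z • α)).comp β))) u
        = δ u + γ (z • x) := by
      simp [map_smul]; rfl
    have hk := key u (z • x)
    rw [hx] at hk
    have hn : ‖z • x‖^2 = ‖z‖^2 * ‖x‖^2 := by rw [norm_smul, mul_pow]
    rw [happ]
    nlinarith [hk]
  refine ⟨hunit, main, opNorm_le_bound _ zero_le_one fun u => ?_⟩
  have h := main u
  have h2 : (0:ℝ) ≤ (1 - ‖z‖ ^ 2) * ‖(Ring.inverse (1 - z • α)) (β u)‖ ^ 2 := by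
    exact mul_nonneg (by nlinarith [norm_nonneg z]) (sq_nonneg _)
  have : ‖(δ + z • (γ.comp ((Ring.inverse (1 - z • α)).comp β))) u‖^2 ≤ ‖u‖^2 := by linarith
  have := le_of_pow_le_pow_left₀ two_ne_zero (norm_nonneg u) this
  simpa using this

end
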